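/- Let β ⊆ α be compositions with N = |α|−|β| ≥ 1. Then, as formal power series in the variables x_1, x_2, … with rational coefficients, Σ_{T ∈ SET(α/β)} F_{comp(Des_dI(T))} = Σ_T x^T, where the right-hand sum runs over all fillings T of the cells of the skew diagram α/β with positive integers such that the entries of every column strictly increase from bottom to top and the entries of every row weakly increase from left to right. (The common value is the skew extended Schur function E_{α/β}.) -/

import Mathlib

open scoped Classical

namespace ImmaculateSkew

/-- `part α i` is the `i`-th part (0-indexed) of the composition `α`, or `0` if out of range. -/
def part (α : List ℕ) (i : ℕ) : ℕ := α.getD i 0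

/-- a composition: a list of positive integers -/
def IsComposition (α : List ℕ) : Prop := ∀ x ∈ α, 0 < x

/-- `β ⊆ α` for compositions -/
def SubComp (β α : List ℕ) : Prop :=
  β.length ≤ α.length ∧ ∀ j < β.length, part β j ≤ part α j

/-- cell `(i, j)` (row `i` from the bottom, column `j`, both 0-indexed) lies in the diagram of `α` -/
def InDiagram (α : List ℕ) (c : ℕ × ℕ) : Prop :=
  c.1 < α.length ∧ c.2 < part α c.1

/-- cell lies in the skew diagram `α/β` -/
def InSkew (α β : List ℕ) (c : ℕ × ℕ) : Prop :=
  InDiagram α c ∧ ¬ InDiagram β c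

/-- the finite set of cells of the skew diagram `α/β` -/
noncomputable def skewCells (α β : List ℕ) : Finset (ℕ × ℕ) :=
  (Finset.range α.length ×ˢ Finset.range (α.sum + 1)).filter (InSkew α β)

/-- `N = |α| - |β|` -/
def skewSize (α β : List ℕ) : ℕ := α.sum - β.sum

/-- a filling of the cells of `α/β` using each entry of `E` exactly once, zero off the diagram -/
structure IsStdOn (α β : List ℕ) (E : Finset ℕ) (T : ℕ × ℕ → ℕ) : Prop where
  zero_off : ∀ c, ¬ InSkew α β c → T c = 0
  mem : ∀ c, InSkew α β c → T c ∈ E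
  inj : ∀ c c', InSkew α β c → InSkew α β c' → T c = T c' → c = c'
  surj : ∀ v ∈ E, ∃ c, InSkew α β c ∧ T c = v

/-- row entries strictly increase left to right -/
def RowsStrict (α β : List ℕ) (T : ℕ × ℕ → ℕ) : Prop :=
  ∀ i j j', j < j' → InSkew α β (i, j) → InSkew α β (i, j') → T (i, j) < T (i, j')

/-- row entries weakly increase left to right -/
def RowsWeak (α β : List ℕ) (T : ℕ × ℕ → ℕ) : Prop :=
  ∀ i j j', j < j' → InSkew α β (i, j) → InSkew α β (i, j') → T (i, j) ≤ T (i, j')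

/-- all column entries strictly increase bottom to top -/
def ColsStrict (α β : List ℕ) (T : ℕ × ℕ → ℕ) : Prop :=
  ∀ i i' j, i < i' → InSkew α β (i, j) → InSkew α β (i', j) → T (i, j) < T (i', j)

/-- all column entries weakly increase bottom to top -/
def ColsWeak (α β : List ℕ) (T : ℕ × ℕ → ℕ) : Prop :=
  ∀ i i' j, i < i' → InSkew α β (i, j) → InSkew α β (i', j) → T (i, j) ≤ T (i', j)

/-- the column-1 entries (those in `α/β`) strictly increase bottom to top -/
def FirstColStrict (α β : List ℕ) (T : ℕ × ℕ → ℕ) : Prop :=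
  ∀ i i', i < i' → InSkew α β (i, 0) → InSkew α β (i', 0) → T (i, 0) < T (i', 0)

/-- the column-1 entries (those in `α/β`) weakly increase bottom to top -/
def FirstColWeak (α β : List ℕ) (T : ℕ × ℕ → ℕ) : Prop :=
  ∀ i i', i < i' → InSkew α β (i, 0) → InSkew α β (i', 0) → T (i, 0) ≤ T (i', 0)

/-- standard immaculate tableau of shape `α/β` with entry set `E` -/
def IsSITOn (α β : List ℕ) (E : Finset ℕ) (T : ℕ × ℕ → ℕ) : Prop :=
  IsStdOn α β E T ∧ RowsStrict α β T ∧ FirstColStrict α β T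

/-- standard immaculate tableau of shape `α/β` (entries `1, …, N`) -/
def IsSIT (α β : List ℕ) (T : ℕ × ℕ → ℕ) : Prop :=
  IsSITOn α β (Finset.Icc 1 (skewSize α β)) T

/-- standard extended tableau: all columns increase bottom to top -/
def IsSET (α β : List ℕ) (T : ℕ × ℕ → ℕ) : Prop :=
  IsSIT α β T ∧ ColsStrict α β T

/-- the four descent-set variants -/
inductive Variant | dI | rdI | Astar | Abar

/-- `rowRel a r r'`: the relation required between the row `r` containing `i` and the row `r'`
containing `i+1` for `i` to be an `a`-descent -/
def rowRel : Variant → ℕ → ℕ → Prop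
  | .dI    => fun r r' => r < r'
  | .rdI   => fun r r' => r' ≤ r
  | .Astar => fun r r' => r' < r
  | .Abar  => fun r r' => r ≤ r'

/-- the `a`-descent set of a tableau -/
noncomputable def Des (a : Variant) (α β : List ℕ) (T : ℕ × ℕ → ℕ) : Finset ℕ :=
  (Finset.Icc 1 (skewSize α β - 1)).filter fun k =>
    ∃ c c', InSkew α β c ∧ InSkew α β c' ∧ T c = k ∧ T c' = k + 1 ∧ rowRel a c.1 c'.1

/-- interchange the entries `i` and `i+1` -/
def swapEntries (i : ℕ) (T : ℕ × ℕ → ℕ) : ℕ × ℕ → ℕ :=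
  fun c => if T c = i then i + 1 else if T c = i + 1 then i else T c

/-- the 0-Hecke operator `π_i^a` on `SIT(α/β) ∪ {0}` (the zero function plays the role of `0`) -/
noncomputable def piOp (a : Variant) (α β : List ℕ) (i : ℕ) (T : ℕ × ℕ → ℕ) : ℕ × ℕ → ℕ :=
  if i ∈ Des a α β T then
    (if IsSIT α β (swapEntries i T) then swapEntries i T else fun _ => 0)
  else T

/-- the fundamental quasisymmetric function `F_{comp(D)}` for `D ⊆ {1,…,N-1}`, as a power
series in the variables `x_1, x_2, …` (variable `x_n` is `X n`; `x_0` is unused) -/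
noncomputable def Fund (N : ℕ) (D : Finset ℕ) : MvPowerSeries ℕ ℚ :=
  fun d => (Nat.card {f : Fin N → ℕ //
    (∀ j, 1 ≤ f j) ∧
    (∀ j k : Fin N, j ≤ k → f j ≤ f k) ∧
    (∀ (j : ℕ) (_ : 1 ≤ j) (h2 : j < N), j ∈ D → f ⟨j - 1, by omega⟩ < f ⟨j, h2⟩) ∧
    (∑ j, Finsupp.single (f j) 1) = d} : ℚ)

/-- the generating function `Σ_T x^T` over all fillings of the given cells with positive
integers satisfying the predicate `P` (and equal to `0` off the given cells) -/
noncomputable def genF (cs : Finset (ℕ × ℕ)) (P : (ℕ × ℕ → ℕ) → Prop) :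
    MvPowerSeries ℕ ℚ :=
  fun d => (Nat.card {T : ℕ × ℕ → ℕ //
    (∀ c, c ∉ cs → T c = 0) ∧ (∀ c ∈ cs, 1 ≤ T c) ∧ P T ∧
    (∑ c ∈ cs, Finsupp.single (T c) 1) = d} : ℚ)

/-- complete homogeneous symmetric function `h_r` -/
noncomputable def hFun (r : ℕ) : MvPowerSeries ℕ ℚ :=
  fun d => (Nat.card {f : Fin r → ℕ //
    (∀ j, 1 ≤ f j) ∧ (∀ j k : Fin r, j ≤ k → f j ≤ f k) ∧
    (∑ j, Finsupp.single (f j) 1) = d} : ℚ)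

/-- elementary symmetric function `e_r` -/
noncomputable def eFun (r : ℕ) : MvPowerSeries ℕ ℚ :=
  fun d => (Nat.card {f : Fin r → ℕ //
    (∀ j, 1 ≤ f j) ∧ (∀ j k : Fin r, j < k → f j < f k) ∧
    (∑ j, Finsupp.single (f j) 1) = d} : ℚ)

/-- send a filling to the corresponding basis vector of the free `ℚ`-vector space on
`SIT(α/β)`, or to the zero vector if it is not a standard immaculate tableau -/
noncomputable def toBasis (α β : List ℕ) (U : ℕ × ℕ → ℕ) :
    ({T : ℕ × ℕ → ℕ // IsSIT α β T} →₀ ℚ) :=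
  if h : IsSIT α β U then Finsupp.single ⟨U, h⟩ 1 else 0

/-- the linear extension of `π_i^a` to the free `ℚ`-vector space on `SIT(α/β)` -/
noncomputable def piLin (a : Variant) (α β : List ℕ) (i : ℕ) :
    ({T : ℕ × ℕ → ℕ // IsSIT α β T} →₀ ℚ) →ₗ[ℚ]
      ({T : ℕ × ℕ → ℕ // IsSIT α β T} →₀ ℚ) :=
  Finsupp.lift _ ℚ _ (fun T => toBasis α β (piOp a α β i T.1))

/-- one step: the tableau `T` is obtained from `S` by applying one operator `π_i^a` -/
def stepRel (a : Variant) (α β : List ℕ) (S T : ℕ × ℕ → ℕ) : Prop :=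
  IsSIT α β T ∧ ∃ i, 1 ≤ i ∧ i ≤ skewSize α β - 1 ∧ piOp a α β i S = T

/-- `T` is obtained from `S` by applying a (possibly empty) sequence of operators `π_i^a`,
all intermediate results being tableaux -/
def reach (a : Variant) (α β : List ℕ) : (ℕ × ℕ → ℕ) → (ℕ × ℕ → ℕ) → Prop :=
  Relation.ReflTransGen (stepRel a α β)

/-- the number of skew cells of `α/β` strictly above row `i` other than column-1 cells -/
noncomputable def aboveCount (α β : List ℕ) (i : ℕ) : ℕ :=
  ∑ i' ∈ Finset.Ico (i + 1) α.length,
    (if i' < β.length then part α i' - part β i' else part α i' - 1)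

/-- the tableau `S^0_{α/β}`: the column-1 cells of `α/β` are filled with `1, …, ℓ(α)-ℓ(β)`
bottom to top, then the remaining cells are filled row by row, top to bottom, left to right,
with consecutive integers -/
noncomputable def S0 (α β : List ℕ) : ℕ × ℕ → ℕ :=
  fun c =>
    if InSkew α β c then
      if c.2 = 0 ∧ β.length ≤ c.1 then c.1 - β.length + 1
      else (α.length - β.length) + aboveCount α β c.1 +
        (if c.1 < β.length then c.2 - part β c.1 + 1 else c.2)
    else 0

/-- the row superstandard tableau `S^{row}_{α/β}`: rows filled left to right with `1, 2, …, N`,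
bottom row first -/
noncomputable def Srow (α β : List ℕ) : ℕ × ℕ → ℕ :=
  fun c =>
    if InSkew α β c then
      (∑ i' ∈ Finset.range c.1, (part α i' - part β i')) + (c.2 - part β c.1 + 1)
    else 0

/-- `c` is read before `c'` in the reading word (rows top to bottom, right to left in a row) -/
def readBefore (c c' : ℕ × ℕ) : Prop :=
  c'.1 < c.1 ∨ (c.1 = c'.1 ∧ c'.2 < c.2)

/-- the number of inversions of the reading word of a tableau of shape `α/β` -/
noncomputable def invNum (α β : List ℕ) (T : ℕ × ℕ → ℕ) : ℕ :=
  ((skewCells α β ×ˢ skewCells α β).filter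
    (fun p => readBefore p.1 p.2 ∧ T p.2 < T p.1)).card

/-- `φ_U(T)`: fill the cells of `β` by `U` and those of `α/β` by `T` with all entries of `T`
shifted up by `m = |β|` -/
noncomputable def phiU (α β : List ℕ) (U T : ℕ × ℕ → ℕ) : ℕ × ℕ → ℕ :=
  fun c => if InDiagram β c then U c else if InSkew α β c then T c + β.sum else 0

/-- restriction `T_{≤ m}` of `T` to entries `≤ m` -/
def restrLe (m : ℕ) (T : ℕ × ℕ → ℕ) : ℕ × ℕ → ℕ :=
  fun c => if T c ≤ m then T c else 0

/-- restriction `T_{> m}` of `T` to entries `> m` -/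
def restrGt (m : ℕ) (T : ℕ × ℕ → ℕ) : ℕ × ℕ → ℕ :=
  fun c => if m < T c then T c else 0

/-- standardisation `std(T_{>m})`: keep the entries `> m` and subtract `m` from each -/
def stdGt (m : ℕ) (T : ℕ × ℕ → ℕ) : ℕ × ℕ → ℕ :=
  fun c => if m < T c then T c - m else 0

/-- `T ∈ X_{α,β}`: `T ∈ SIT(α)` and the entries `> |β|` of `T` occupy exactly the cells
of `α/β` -/
def memX (α β : List ℕ) (T : ℕ × ℕ → ℕ) : Prop :=
  IsSIT α [] T ∧ ∀ c, InDiagram α c → (β.sum < T c ↔ ¬ InDiagram β c)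

-- ### AUX START


lemma part_le_sum (γ : List ℕ) (i : ℕ) : part γ i ≤ γ.sum := by
  induction γ generalizing i with
  | nil => simp [part]
  | cons a l ih =>
    cases i with
    | zero => simp [part]
    | succ n => have := ih n; simp only [part, List.getD_cons_succ, List.sum_cons] at *; omega

lemma part_eq_zero (γ : List ℕ) (i : ℕ) (h : γ.length ≤ i) : part γ i = 0 :=
  List.getD_eq_default _ _ h

lemma sum_part (γ : List ℕ) : ∑ i ∈ Finset.range γ.length, part γ i = γ.sum := by
  induction γ with
  | nil => simp
  | cons a l ih =>
    rw [List.length_cons, Finset.sum_range_succ']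
    simp only [part, List.getD_cons_succ, List.getD_cons_zero, List.sum_cons]
    rw [show (∑ i ∈ Finset.range l.length, l.getD i 0) = l.sum from ih]
    omega

lemma inSkew_iff (α β : List ℕ) (c : ℕ × ℕ) :
    InSkew α β c ↔ c.1 < α.length ∧ part β c.1 ≤ c.2 ∧ c.2 < part α c.1 := by
  unfold InSkew InDiagram
  by_cases h : c.1 < β.length
  · constructor
    · rintro ⟨⟨h1, h2⟩, h3⟩; exact ⟨h1, by omega, h2⟩
    · rintro ⟨h1, h2, h3⟩; exact ⟨⟨h1, h3⟩, by omega⟩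
  · have : part β c.1 = 0 := part_eq_zero _ _ (by omega)
    constructor
    · rintro ⟨⟨h1, h2⟩, h3⟩; exact ⟨h1, by omega, h2⟩
    · rintro ⟨h1, h2, h3⟩; exact ⟨⟨h1, h3⟩, by omega⟩

lemma mem_skewCells (α β : List ℕ) (c : ℕ × ℕ) :
    c ∈ skewCells α β ↔ InSkew α β c := by
  unfold skewCells
  rw [Finset.mem_filter, Finset.mem_product, Finset.mem_range, Finset.mem_range]
  constructor
  · exact fun h => h.2
  · intro h
    refine ⟨⟨h.1.1, ?_⟩, h⟩
    have h2 := h.1.2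
    have := part_le_sum α c.1
    omega

lemma card_skewCells (α β : List ℕ) (hsub : SubComp β α) :
    (skewCells α β).card = skewSize α β := by
  have hrows : skewCells α β = (Finset.range α.length).biUnion
      (fun i => (Finset.Ico (part β i) (part α i)).image (fun j => (i, j))) := by
    ext ⟨i, j⟩
    simp only [mem_skewCells, inSkew_iff, Finset.mem_biUnion, Finset.mem_range,
      Finset.mem_image, Finset.mem_Ico, Prod.mk.injEq]
    constructor
    · rintro ⟨h1, h2, h3⟩; exact ⟨i, h1, j, ⟨h2, h3⟩, rfl, rfl⟩
    · rintro ⟨i', h1, j', ⟨h2, h3⟩, rfl, rfl⟩; exact ⟨h1, h2, h3⟩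
  rw [hrows, Finset.card_biUnion]
  · have hcard : ∀ i ∈ Finset.range α.length,
        ((Finset.Ico (part β i) (part α i)).image (fun j => (i, j))).card
          = part α i - part β i := by
      intro i _
      rw [Finset.card_image_of_injective _ (fun a b h => by simpa using h), Nat.card_Ico]
    rw [Finset.sum_congr rfl hcard]
    have hle : ∀ i ∈ Finset.range α.length, part β i ≤ part α i := by
      intro i hi
      rw [Finset.mem_range] at hi
      by_cases h : i < β.length
      · exact hsub.2 i h
      · rw [part_eq_zero β i (by omega)]; exact Nat.zero_le _
    have hb : ∑ i ∈ Finset.range α.length, part β i = β.sum := by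
      rw [← sum_part β]
      have := hsub.1
      exact (Finset.sum_subset (by intro x hx; rw [Finset.mem_range] at *; omega
        ) (fun x _ hx => part_eq_zero β x (by rw [Finset.mem_range] at hx; omega))).symm
    have hsum : (∑ i ∈ Finset.range α.length, (part α i - part β i))
        + ∑ i ∈ Finset.range α.length, part β i
        = ∑ i ∈ Finset.range α.length, part α i := by
      rw [← Finset.sum_add_distrib]
      exact Finset.sum_congr rfl (fun i hi => by have := hle i hi; omega)
    have ha := sum_part α
    unfold skewSize
    omega
  · intro i _ i' _ hne
    simp only [Finset.disjoint_left, Finset.mem_image, Finset.mem_Ico]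
    rintro ⟨a, b⟩ ⟨j, _, h1⟩ ⟨j', _, h2⟩
    apply hne
    simp only [Prod.mk.injEq] at h1 h2
    omega



-- ### key order

def keyLt (T : ℕ × ℕ → ℕ) (c c' : ℕ × ℕ) : Prop :=
  T c < T c' ∨ (T c = T c' ∧ (c'.1 < c.1 ∨ (c.1 = c'.1 ∧ c.2 < c'.2)))

lemma keyLt_trans {T : ℕ × ℕ → ℕ} {a b c : ℕ × ℕ} (h1 : keyLt T a b) (h2 : keyLt T b c) :
    keyLt T a c := by
  unfold keyLt at *; omega

lemma keyLt_irrefl (T : ℕ × ℕ → ℕ) (a : ℕ × ℕ) : ¬ keyLt T a a := by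
  unfold keyLt; omega

lemma keyLt_total {T : ℕ × ℕ → ℕ} {a b : ℕ × ℕ} (h : a ≠ b) :
    keyLt T a b ∨ keyLt T b a := by
  unfold keyLt
  rcases Nat.lt_trichotomy (T a) (T b) with h1 | h1 | h1
  · tauto
  · rcases Nat.lt_trichotomy a.1 b.1 with h2 | h2 | h2
    · tauto
    · rcases Nat.lt_trichotomy a.2 b.2 with h3 | h3 | h3
      · tauto
      · exact absurd (Prod.ext h2 h3) h
      · tauto
    · tauto
  · tauto

lemma keyLt_asymm {T : ℕ × ℕ → ℕ} {a b : ℕ × ℕ} (h : keyLt T a b) : ¬ keyLt T b a :=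
  fun h' => keyLt_irrefl T a (keyLt_trans h h')

-- ### rank

noncomputable def rk (C : Finset (ℕ × ℕ)) (T : ℕ × ℕ → ℕ) (c : ℕ × ℕ) : ℕ :=
  (C.filter (fun c' => keyLt T c' c)).card

lemma rk_lt_rk {C : Finset (ℕ × ℕ)} {T : ℕ × ℕ → ℕ} {c c' : ℕ × ℕ}
    (hc : c ∈ C) (h : keyLt T c c') : rk C T c < rk C T c' := by
  apply Finset.card_lt_card
  constructor
  · intro x hx
    rw [Finset.mem_filter] at *
    exact ⟨hx.1, keyLt_trans hx.2 h⟩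
  · intro hsubs
    have : c ∈ C.filter (fun c'' => keyLt T c'' c') := Finset.mem_filter.mpr ⟨hc, h⟩
    have := hsubs this
    rw [Finset.mem_filter] at this
    exact keyLt_irrefl T c this.2

lemma rk_lt_card {C : Finset (ℕ × ℕ)} {T : ℕ × ℕ → ℕ} {c : ℕ × ℕ} (hc : c ∈ C) :
    rk C T c < C.card := by
  apply Finset.card_lt_card
  constructor
  · exact Finset.filter_subset _ _
  · intro hsubs
    have := hsubs hc
    rw [Finset.mem_filter] at this
    exact keyLt_irrefl T c this.2

lemma rk_injOn {C : Finset (ℕ × ℕ)} {T : ℕ × ℕ → ℕ} {c c' : ℕ × ℕ}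
    (hc : c ∈ C) (hc' : c' ∈ C) (h : rk C T c = rk C T c') : c = c' := by
  by_contra hne
  rcases keyLt_total (T := T) hne with h1 | h1
  · exact absurd h (Nat.ne_of_lt (rk_lt_rk hc h1))
  · exact absurd h.symm (Nat.ne_of_lt (rk_lt_rk hc' h1))

lemma rk_surj {C : Finset (ℕ × ℕ)} {T : ℕ × ℕ → ℕ} {k : ℕ} (hk : k < C.card) :
    ∃ c ∈ C, rk C T c = k := by
  have := Finset.surj_on_of_inj_on_of_card_le (s := C) (t := Finset.range C.card)
    (fun a _ => rk C T a) (fun a ha => Finset.mem_range.mpr (rk_lt_card ha))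
    (fun a₁ a₂ h1 h2 h => rk_injOn h1 h2 h) (by rw [Finset.card_range])
  obtain ⟨c, hc, hck⟩ := this k (Finset.mem_range.mpr hk)
  exact ⟨c, hc, hck.symm⟩

lemma keyLt_of_rk_lt {C : Finset (ℕ × ℕ)} {T : ℕ × ℕ → ℕ} {c c' : ℕ × ℕ}
    (hc : c ∈ C) (hc' : c' ∈ C) (h : rk C T c < rk C T c') : keyLt T c c' := by
  rcases eq_or_ne c c' with rfl | hne
  · omega
  rcases keyLt_total (T := T) hne with h1 | h1
  · exact h1
  · exact absurd h (by have := rk_lt_rk hc' h1; omega)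


-- ### chain lemma

lemma std_mem_Icc {α β : List ℕ} {S : ℕ × ℕ → ℕ} {E : Finset ℕ}
    (hstd : IsStdOn α β E S) {c : ℕ × ℕ} (hc : InSkew α β c) : S c ∈ E :=
  hstd.mem c hc

lemma chain_dI {α β : List ℕ} {S : ℕ × ℕ → ℕ}
    (hstd : IsStdOn α β (Finset.Icc 1 (skewSize α β)) S)
    {c c' : ℕ × ℕ} (hc : InSkew α β c) (hc' : InSkew α β c')
    (hle : S c ≤ S c')
    (hnd : ∀ k, S c ≤ k → k < S c' → k ∉ Des .dI α β S) :
    c'.1 ≤ c.1 := by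
  have key : ∀ b, S c ≤ b → ∀ c'' : ℕ × ℕ, InSkew α β c'' → S c'' = b →
      (∀ k, S c ≤ k → k < b → k ∉ Des .dI α β S) → c''.1 ≤ c.1 := by
    intro b hb
    induction b, hb using Nat.le_induction with
    | base =>
      intro c'' h1 h2 _
      have : c'' = c := hstd.inj _ _ h1 hc h2
      rw [this]
    | succ b hb ih =>
      intro c'' h1 h2 hnd
      have hbN : b + 1 ∈ Finset.Icc 1 (skewSize α β) := h2 ▸ hstd.mem c'' h1
      rw [Finset.mem_Icc] at hbN
      have hScmem := hstd.mem c hc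
      rw [Finset.mem_Icc] at hScmem
      have hbIcc : b ∈ Finset.Icc 1 (skewSize α β) := Finset.mem_Icc.mpr (by omega)
      obtain ⟨cb, hcbSkew, hcbv⟩ := hstd.surj b hbIcc
      have hnotdes := hnd b hb (by omega)
      have hrow : ¬ (cb.1 < c''.1) := by
        intro hlt
        apply hnotdes
        unfold Des
        rw [Finset.mem_filter, Finset.mem_Icc]
        exact ⟨⟨by omega, by omega⟩, cb, c'', hcbSkew, h1, hcbv, by omega, hlt⟩
      have := ih cb hcbSkew hcbv (fun k hk1 hk2 => hnd k hk1 (by omega))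
      omega
  exact key (S c') hle c' hc' rfl hnd


-- ### extension of f and sums

noncomputable def fex (N : ℕ) (f : Fin N → ℕ) (k : ℕ) : ℕ :=
  if h : k < N then f ⟨k, h⟩ else 0

lemma fex_eq {N : ℕ} (f : Fin N → ℕ) {k : ℕ} (h : k < N) : fex N f k = f ⟨k, h⟩ :=
  dif_pos h

lemma fex_mono {N : ℕ} {f : Fin N → ℕ} (hf : ∀ j k : Fin N, j ≤ k → f j ≤ f k)
    {k k' : ℕ} (h : k ≤ k') (h' : k' < N) : fex N f k ≤ fex N f k' := by
  rw [fex_eq f (lt_of_le_of_lt h h'), fex_eq f h']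
  exact hf _ _ h

lemma sum_over_cells {M : Type*} [AddCommMonoid M] {α β : List ℕ} {S : ℕ × ℕ → ℕ}
    (hstd : IsStdOn α β (Finset.Icc 1 (skewSize α β)) S) (g : ℕ → M) :
    ∑ c ∈ skewCells α β, g (S c) = ∑ k ∈ Finset.Icc 1 (skewSize α β), g k := by
  refine Finset.sum_bij (fun c _ => S c) ?_ ?_ ?_ ?_
  · intro c hc; exact hstd.mem c ((mem_skewCells α β c).mp hc)
  · intro c hc c' hc' h
    exact hstd.inj c c' ((mem_skewCells α β c).mp hc) ((mem_skewCells α β c').mp hc') h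
  · intro v hv
    obtain ⟨c, hc, hcv⟩ := hstd.surj v hv
    exact ⟨c, (mem_skewCells α β c).mpr hc, hcv⟩
  · intro c hc; rfl

lemma Icc_to_fin {M : Type*} [AddCommMonoid M] (N : ℕ) (g : ℕ → M) :
    ∑ k ∈ Finset.Icc 1 N, g k = ∑ j : Fin N, g (j.1 + 1) := by
  refine Finset.sum_bij (fun k hk => (⟨k - 1, by rw [Finset.mem_Icc] at hk; omega⟩ : Fin N))
    ?_ ?_ ?_ ?_
  · intro k hk; exact Finset.mem_univ _
  · intro k hk k' hk' h
    rw [Finset.mem_Icc] at hk hk'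
    have hkk : k - 1 = k' - 1 := congrArg Fin.val h
    omega
  · intro j _
    exact ⟨j.1 + 1, Finset.mem_Icc.mpr (by omega), by simp⟩
  · intro k hk
    rw [Finset.mem_Icc] at hk
    show g k = g (k - 1 + 1)
    congr 1
    omega

-- ### the forward map

noncomputable def Phi (α β : List ℕ) (N : ℕ) (f : Fin N → ℕ) (S : ℕ × ℕ → ℕ) :
    ℕ × ℕ → ℕ :=
  fun c => if InSkew α β c then fex N f (S c - 1) else 0

section Forward

variable {α β : List ℕ} {S : ℕ × ℕ → ℕ} {f : Fin (skewSize α β) → ℕ}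

lemma Sc_bounds (hstd : IsStdOn α β (Finset.Icc 1 (skewSize α β)) S)
    {c : ℕ × ℕ} (hc : InSkew α β c) : 1 ≤ S c ∧ S c ≤ skewSize α β := by
  have := hstd.mem c hc; rw [Finset.mem_Icc] at this; exact this

lemma Phi_pos (hstd : IsStdOn α β (Finset.Icc 1 (skewSize α β)) S)
    (hf1 : ∀ j, 1 ≤ f j) {c : ℕ × ℕ} (hc : InSkew α β c) :
    1 ≤ Phi α β (skewSize α β) f S c := by
  obtain ⟨h1, h2⟩ := Sc_bounds hstd hc
  unfold Phi
  rw [if_pos hc, fex_eq f (by omega)]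
  exact hf1 _

lemma fex_strict_at_des (hS : IsSET α β S)
    (hf3 : ∀ (j : ℕ) (_ : 1 ≤ j) (h2 : j < skewSize α β), j ∈ Des .dI α β S →
      f ⟨j - 1, by omega⟩ < f ⟨j, h2⟩)
    {k : ℕ} (hk : k ∈ Des .dI α β S) :
    fex (skewSize α β) f (k - 1) < fex (skewSize α β) f k := by
  have hkI : k ∈ Finset.Icc 1 (skewSize α β - 1) := Finset.mem_filter.mp hk |>.1
  rw [Finset.mem_Icc] at hkI
  have hkN : k < skewSize α β := by omega
  rw [fex_eq f (by omega), fex_eq f hkN]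
  exact hf3 k (by omega) hkN hk

lemma exists_des_between (hS : IsSET α β S)
    {c c' : ℕ × ℕ} (hc : InSkew α β c) (hc' : InSkew α β c')
    (hrow : c.1 < c'.1) (hlt : S c < S c') :
    ∃ k, S c ≤ k ∧ k < S c' ∧ k ∈ Des .dI α β S := by
  by_contra h
  push_neg at h
  have := chain_dI hS.1.1 hc hc' (le_of_lt hlt) (fun k h1 h2 => by
    intro hmem; exact absurd hmem (by intro hm; exact absurd hm ((fun hx => (h k h1 h2) hx))))
  omega

lemma Phi_colsStrict (hS : IsSET α β S)
    (hf2 : ∀ j k : Fin (skewSize α β), j ≤ k → f j ≤ f k)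
    (hf3 : ∀ (j : ℕ) (_ : 1 ≤ j) (h2 : j < skewSize α β), j ∈ Des .dI α β S →
      f ⟨j - 1, by omega⟩ < f ⟨j, h2⟩) :
    ColsStrict α β (Phi α β (skewSize α β) f S) := by
  intro i i' j hii hc hc'
  have hstd := hS.1.1
  have hab : S (i, j) < S (i', j) := hS.2 i i' j hii hc hc'
  obtain ⟨ha1, ha2⟩ := Sc_bounds hstd hc
  obtain ⟨hb1, hb2⟩ := Sc_bounds hstd hc'
  obtain ⟨k, hk1, hk2, hk3⟩ := exists_des_between hS hc hc' hii hab
  unfold Phi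
  rw [if_pos hc, if_pos hc']
  calc fex (skewSize α β) f (S (i, j) - 1)
      ≤ fex (skewSize α β) f (k - 1) := fex_mono hf2 (by omega) (by omega)
    _ < fex (skewSize α β) f k := fex_strict_at_des hS hf3 hk3
    _ ≤ fex (skewSize α β) f (S (i', j) - 1) := fex_mono hf2 (by omega) (by omega)

lemma Phi_rowsWeak (hS : IsSET α β S)
    (hf2 : ∀ j k : Fin (skewSize α β), j ≤ k → f j ≤ f k) :
    RowsWeak α β (Phi α β (skewSize α β) f S) := by
  intro i j j' hjj hc hc'
  have hab : S (i, j) < S (i, j') := hS.1.2.1 i j j' hjj hc hc'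
  obtain ⟨hb1, hb2⟩ := Sc_bounds hS.1.1 hc'
  unfold Phi
  rw [if_pos hc, if_pos hc']
  exact fex_mono hf2 (by omega) (by omega)

lemma Phi_weight (hstd : IsStdOn α β (Finset.Icc 1 (skewSize α β)) S) :
    ∑ c ∈ skewCells α β, Finsupp.single (Phi α β (skewSize α β) f S c) (1 : ℕ)
      = ∑ j : Fin (skewSize α β), Finsupp.single (f j) (1 : ℕ) := by
  have h1 : ∀ c ∈ skewCells α β,
      Finsupp.single (Phi α β (skewSize α β) f S c) (1 : ℕ)
        = (fun k => Finsupp.single (fex (skewSize α β) f (k - 1)) (1 : ℕ)) (S c) := by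
    intro c hc
    rw [mem_skewCells] at hc
    simp only [Phi, if_pos hc]
  rw [Finset.sum_congr rfl h1,
    sum_over_cells hstd (fun k => Finsupp.single (fex (skewSize α β) f (k - 1)) (1 : ℕ)),
    Icc_to_fin (skewSize α β) (fun k => Finsupp.single (fex (skewSize α β) f (k - 1)) (1 : ℕ))]
  refine Finset.sum_congr rfl (fun j _ => ?_)
  rw [Nat.add_sub_cancel, fex_eq f j.2]

end Forward


-- ### the standardisation map

noncomputable def rkS (α β : List ℕ) (T : ℕ × ℕ → ℕ) : ℕ × ℕ → ℕ :=
  fun c => if InSkew α β c then rk (skewCells α β) T c + 1 else 0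

noncomputable def stdF (α β : List ℕ) (N : ℕ) (T : ℕ × ℕ → ℕ) : Fin N → ℕ :=
  fun j => ∑ c ∈ (skewCells α β).filter (fun c => rkS α β T c = j.1 + 1), T c

section Std

variable {α β : List ℕ} {T : ℕ × ℕ → ℕ}

lemma rkS_std (hsub : SubComp β α) :
    IsStdOn α β (Finset.Icc 1 (skewSize α β)) (rkS α β T) := by
  have hcard := card_skewCells α β hsub
  constructor
  · intro c hc; exact if_neg hc
  · intro c hc
    have := rk_lt_card (T := T) ((mem_skewCells α β c).mpr hc)
    rw [Finset.mem_Icc]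
    unfold rkS
    rw [if_pos hc]
    omega
  · intro c c' hc hc' h
    unfold rkS at h
    rw [if_pos hc, if_pos hc'] at h
    exact rk_injOn (T := T) ((mem_skewCells α β c).mpr hc) ((mem_skewCells α β c').mpr hc')
      (by omega)
  · intro v hv
    rw [Finset.mem_Icc] at hv
    obtain ⟨c, hc, hck⟩ := rk_surj (C := skewCells α β) (T := T) (k := v - 1)
      (by omega)
    refine ⟨c, (mem_skewCells α β c).mp hc, ?_⟩
    unfold rkS
    rw [if_pos ((mem_skewCells α β c).mp hc)]
    omega

lemma keyLt_of_rkS_lt {c c' : ℕ × ℕ} (hc : InSkew α β c) (hc' : InSkew α β c')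
    (h : rkS α β T c < rkS α β T c') : keyLt T c c' := by
  unfold rkS at h
  rw [if_pos hc, if_pos hc'] at h
  exact keyLt_of_rk_lt ((mem_skewCells α β c).mpr hc) ((mem_skewCells α β c').mpr hc')
    (by omega)

lemma rkS_lt_of_keyLt {c c' : ℕ × ℕ} (hc : InSkew α β c) (hc' : InSkew α β c')
    (h : keyLt T c c') : rkS α β T c < rkS α β T c' := by
  unfold rkS
  rw [if_pos hc, if_pos hc']
  have := rk_lt_rk (C := skewCells α β) (T := T) ((mem_skewCells α β c).mpr hc) h
  omega

lemma rkS_isSET (hsub : SubComp β α) (hTc : ColsStrict α β T) (hTr : RowsWeak α β T) :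
    IsSET α β (rkS α β T) := by
  have hrows : RowsStrict α β (rkS α β T) := by
    intro i j j' hjj hc hc'
    apply rkS_lt_of_keyLt hc hc'
    have hle := hTr i j j' hjj hc hc'
    rcases lt_or_eq_of_le hle with h | h
    · exact Or.inl h
    · exact Or.inr ⟨h, Or.inr ⟨rfl, hjj⟩⟩
  have hcols : ColsStrict α β (rkS α β T) := by
    intro i i' j hii hc hc'
    exact rkS_lt_of_keyLt hc hc' (Or.inl (hTc i i' j hii hc hc'))
  exact ⟨⟨rkS_std hsub, hrows, fun i i' hii hc hc' => hcols i i' 0 hii hc hc'⟩, hcols⟩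

lemma stdF_spec {N : ℕ} (j : Fin N) {c : ℕ × ℕ} (hc : InSkew α β c)
    (hrk : rkS α β T c = j.1 + 1) : stdF α β N T j = T c := by
  have hfilter : (skewCells α β).filter (fun c' => rkS α β T c' = j.1 + 1) = {c} := by
    ext c''
    rw [Finset.mem_filter, Finset.mem_singleton]
    constructor
    · rintro ⟨h1, h2⟩
      have hc'' := (mem_skewCells α β c'').mp h1
      unfold rkS at h2 hrk
      rw [if_pos hc''] at h2
      rw [if_pos hc] at hrk
      exact rk_injOn (T := T) h1 ((mem_skewCells α β c).mpr hc) (by omega)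
    · rintro rfl
      exact ⟨(mem_skewCells α β _).mpr hc, hrk⟩
  unfold stdF
  rw [hfilter, Finset.sum_singleton]

lemma stdF_exists (hsub : SubComp β α) (j : Fin (skewSize α β)) :
    ∃ c, InSkew α β c ∧ rkS α β T c = j.1 + 1 ∧ stdF α β (skewSize α β) T j = T c := by
  obtain ⟨c, hc, hcv⟩ := (rkS_std (T := T) hsub).surj (j.1 + 1)
    (Finset.mem_Icc.mpr (by have := j.2; omega))
  exact ⟨c, hc, hcv, stdF_spec j hc hcv⟩

lemma T_eq_fex (hsub : SubComp β α) {c : ℕ × ℕ} (hc : InSkew α β c) :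
    T c = fex (skewSize α β) (stdF α β (skewSize α β) T) (rkS α β T c - 1) := by
  obtain ⟨h1, h2⟩ := Sc_bounds (rkS_std (T := T) hsub) hc
  rw [fex_eq _ (show rkS α β T c - 1 < skewSize α β by omega)]
  exact (stdF_spec ⟨rkS α β T c - 1, by omega⟩ hc (by simp; omega)).symm

lemma Phi_stdF_eq (hsub : SubComp β α) (hT0 : ∀ c, ¬ InSkew α β c → T c = 0) :
    Phi α β (skewSize α β) (stdF α β (skewSize α β) T) (rkS α β T) = T := by
  funext c
  unfold Phi
  by_cases hc : InSkew α β c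
  · rw [if_pos hc, ← T_eq_fex hsub hc]
  · rw [if_neg hc, hT0 c hc]

lemma stdF_pos (hsub : SubComp β α) (hT1 : ∀ c, InSkew α β c → 1 ≤ T c)
    (j : Fin (skewSize α β)) : 1 ≤ stdF α β (skewSize α β) T j := by
  obtain ⟨c, hc, _, heq⟩ := stdF_exists (T := T) hsub j
  rw [heq]; exact hT1 c hc

lemma stdF_mono (hsub : SubComp β α) (j k : Fin (skewSize α β)) (hjk : j ≤ k) :
    stdF α β (skewSize α β) T j ≤ stdF α β (skewSize α β) T k := by
  rcases eq_or_ne j k with rfl | hne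
  · exact le_refl _
  obtain ⟨c, hc, hrk, heq⟩ := stdF_exists (T := T) hsub j
  obtain ⟨c', hc', hrk', heq'⟩ := stdF_exists (T := T) hsub k
  have hjk' : j.1 < k.1 := lt_of_le_of_ne hjk (fun h => hne (Fin.ext h))
  have hkey := keyLt_of_rkS_lt (T := T) hc hc' (by omega)
  rw [heq, heq']
  unfold keyLt at hkey
  omega

lemma stdF_strict_at_des (hsub : SubComp β α) (j : ℕ) (h1 : 1 ≤ j)
    (h2 : j < skewSize α β) (hdes : j ∈ Des .dI α β (rkS α β T)) :
    stdF α β (skewSize α β) T ⟨j - 1, by omega⟩ < stdF α β (skewSize α β) T ⟨j, h2⟩ := by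
  obtain ⟨-, c, c', hc, hc', hv, hv', hrow⟩ := Finset.mem_filter.mp hdes
  have e1 : stdF α β (skewSize α β) T ⟨j - 1, by omega⟩ = T c :=
    stdF_spec _ hc (by simp only [hv]; omega)
  have e2 : stdF α β (skewSize α β) T ⟨j, h2⟩ = T c' := stdF_spec _ hc' (by simp [hv'])
  rw [e1, e2]
  have hkey := keyLt_of_rkS_lt (T := T) hc hc' (by omega)
  unfold keyLt at hkey
  have : c.1 < c'.1 := hrow
  omega

end Std


-- ### round trip: standardising Phi

section RoundTrip

variable {α β : List ℕ} {S : ℕ × ℕ → ℕ} {f : Fin (skewSize α β) → ℕ}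

lemma keyLt_Phi (hS : IsSET α β S)
    (hf2 : ∀ j k : Fin (skewSize α β), j ≤ k → f j ≤ f k)
    (hf3 : ∀ (j : ℕ) (_ : 1 ≤ j) (h2 : j < skewSize α β), j ∈ Des .dI α β S →
      f ⟨j - 1, by omega⟩ < f ⟨j, h2⟩)
    {c c' : ℕ × ℕ} (hc : InSkew α β c) (hc' : InSkew α β c') (hlt : S c < S c') :
    keyLt (Phi α β (skewSize α β) f S) c c' := by
  have hstd := hS.1.1
  obtain ⟨ha1, ha2⟩ := Sc_bounds hstd hc
  obtain ⟨hb1, hb2⟩ := Sc_bounds hstd hc'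
  have hTc : Phi α β (skewSize α β) f S c = fex (skewSize α β) f (S c - 1) := if_pos hc
  have hTc' : Phi α β (skewSize α β) f S c' = fex (skewSize α β) f (S c' - 1) := if_pos hc'
  have hle : fex (skewSize α β) f (S c - 1) ≤ fex (skewSize α β) f (S c' - 1) :=
    fex_mono hf2 (by omega) (by omega)
  rcases lt_or_eq_of_le hle with h | h
  · exact Or.inl (by omega)
  have hnd : ∀ k, S c ≤ k → k < S c' → k ∉ Des .dI α β S := by
    intro k h1 h2 hdes
    have h3 := fex_strict_at_des hS hf3 hdes
    have h4 : fex (skewSize α β) f (S c - 1) ≤ fex (skewSize α β) f (k - 1) :=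
      fex_mono hf2 (by omega) (by omega)
    have h5 : fex (skewSize α β) f k ≤ fex (skewSize α β) f (S c' - 1) :=
      fex_mono hf2 (by omega) (by omega)
    omega
  have hrow : c'.1 ≤ c.1 := chain_dI hstd hc hc' (le_of_lt hlt) hnd
  rcases lt_or_eq_of_le hrow with h' | h'
  · exact Or.inr ⟨by omega, Or.inl h'⟩
  have hcol : c.2 < c'.2 := by
    rcases Nat.lt_trichotomy c.2 c'.2 with h'' | h'' | h''
    · exact h''
    · exact absurd (Prod.ext h'.symm h'') (fun he => by rw [he] at hlt; omega)
    · exfalso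
      have hc2 : InSkew α β (c.1, c.2) := hc
      have hc2' : InSkew α β (c.1, c'.2) := by rw [show c.1 = c'.1 from h'.symm]; exact hc'
      have := hS.1.2.1 c.1 c'.2 c.2 h'' hc2' hc2
      rw [show ((c.1 : ℕ), c.2) = c from rfl,
        show ((c.1 : ℕ), c'.2) = c' from by rw [h'.symm]] at this
      omega
  exact Or.inr ⟨by omega, Or.inr ⟨h'.symm, hcol⟩⟩

lemma rkS_Phi (hsub : SubComp β α) (hS : IsSET α β S)
    (hf2 : ∀ j k : Fin (skewSize α β), j ≤ k → f j ≤ f k)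
    (hf3 : ∀ (j : ℕ) (_ : 1 ≤ j) (h2 : j < skewSize α β), j ∈ Des .dI α β S →
      f ⟨j - 1, by omega⟩ < f ⟨j, h2⟩) :
    rkS α β (Phi α β (skewSize α β) f S) = S := by
  have hstd := hS.1.1
  funext c
  by_cases hc : InSkew α β c
  · obtain ⟨ha1, ha2⟩ := Sc_bounds hstd hc
    have hfilter : (skewCells α β).filter
          (fun c'' => keyLt (Phi α β (skewSize α β) f S) c'' c)
        = (skewCells α β).filter (fun c'' => S c'' < S c) := by
      ext c''
      rw [Finset.mem_filter, Finset.mem_filter]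
      refine and_congr_right (fun hmem => ?_)
      have hc'' := (mem_skewCells α β c'').mp hmem
      constructor
      · intro hkey
        rcases Nat.lt_trichotomy (S c'') (S c) with h | h | h
        · exact h
        · exact absurd hkey (by rw [hstd.inj c'' c hc'' hc h]; exact keyLt_irrefl _ _)
        · exact absurd hkey (keyLt_asymm (keyLt_Phi hS hf2 hf3 hc hc'' h))
      · exact fun h => keyLt_Phi hS hf2 hf3 hc'' hc h
    have hcard : ((skewCells α β).filter (fun c'' => S c'' < S c)).card = S c - 1 := by
      have := Finset.card_bij (s := (skewCells α β).filter (fun c'' => S c'' < S c))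
        (t := Finset.Ico 1 (S c)) (fun c'' _ => S c'')
        (by
          intro c'' hc''
          rw [Finset.mem_filter] at hc''
          obtain ⟨h1, h2⟩ := Sc_bounds hstd ((mem_skewCells α β c'').mp hc''.1)
          rw [Finset.mem_Ico]
          exact ⟨h1, hc''.2⟩)
        (by
          intro x hx y hy h
          rw [Finset.mem_filter] at hx hy
          exact hstd.inj x y ((mem_skewCells α β x).mp hx.1) ((mem_skewCells α β y).mp hy.1) h)
        (by
          intro v hv
          rw [Finset.mem_Ico] at hv
          obtain ⟨cv, hcv, hcvv⟩ := hstd.surj v (Finset.mem_Icc.mpr (by omega))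
          exact ⟨cv, Finset.mem_filter.mpr ⟨(mem_skewCells α β cv).mpr hcv, by omega⟩, hcvv⟩)
      rw [this, Nat.card_Ico]
    show (if InSkew α β c then rk (skewCells α β) (Phi α β (skewSize α β) f S) c + 1 else 0)
      = S c
    rw [if_pos hc]
    unfold rk
    rw [hfilter, hcard]
    omega
  · show (if InSkew α β c then _ else 0) = S c
    rw [if_neg hc, hstd.zero_off c hc]

lemma stdF_Phi (hsub : SubComp β α) (hS : IsSET α β S)
    (hf2 : ∀ j k : Fin (skewSize α β), j ≤ k → f j ≤ f k)
    (hf3 : ∀ (j : ℕ) (_ : 1 ≤ j) (h2 : j < skewSize α β), j ∈ Des .dI α β S →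
      f ⟨j - 1, by omega⟩ < f ⟨j, h2⟩) :
    stdF α β (skewSize α β) (Phi α β (skewSize α β) f S) = f := by
  funext j
  obtain ⟨c, hc, hcv⟩ := hS.1.1.surj (j.1 + 1) (Finset.mem_Icc.mpr (by have := j.2; omega))
  rw [stdF_spec j hc (by rw [rkS_Phi hsub hS hf2 hf3]; exact hcv)]
  show (if InSkew α β c then fex (skewSize α β) f (S c - 1) else 0) = f j
  rw [if_pos hc, hcv, Nat.add_sub_cancel, fex_eq f j.2, Fin.eta]

end RoundTrip


-- ### the two counting types

abbrev FFd (α β : List ℕ) (S : ℕ × ℕ → ℕ) (d : ℕ →₀ ℕ) : Type :=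
  {f : Fin (skewSize α β) → ℕ //
    (∀ j, 1 ≤ f j) ∧
    (∀ j k : Fin (skewSize α β), j ≤ k → f j ≤ f k) ∧
    (∀ (j : ℕ) (_ : 1 ≤ j) (h2 : j < skewSize α β), j ∈ Des .dI α β S →
      f ⟨j - 1, by omega⟩ < f ⟨j, h2⟩) ∧
    (∑ j, Finsupp.single (f j) 1) = d}

abbrev GGd (α β : List ℕ) (d : ℕ →₀ ℕ) : Type :=
  {T : ℕ × ℕ → ℕ //
    (∀ c, c ∉ skewCells α β → T c = 0) ∧
    (∀ c ∈ skewCells α β, 1 ≤ T c) ∧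
    (ColsStrict α β T ∧ RowsWeak α β T) ∧
    (∑ c ∈ skewCells α β, Finsupp.single (T c) 1) = d}

lemma Fund_apply (α β : List ℕ) (S : ℕ × ℕ → ℕ) (d : ℕ →₀ ℕ) :
    Fund (skewSize α β) (Des .dI α β S) d = (Nat.card (FFd α β S d) : ℚ) := rfl

lemma genF_apply (α β : List ℕ) (d : ℕ →₀ ℕ) :
    genF (skewCells α β) (fun T => ColsStrict α β T ∧ RowsWeak α β T) d
      = (Nat.card (GGd α β d) : ℚ) := rfl

-- ### finiteness

lemma mem_support_of_sum {ι : Type*} (s : Finset ι) (g : ι → ℕ) (d : ℕ →₀ ℕ)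
    (h : ∑ i ∈ s, Finsupp.single (g i) (1 : ℕ) = d) {i0 : ι} (hi0 : i0 ∈ s) :
    g i0 ∈ d.support := by
  rw [Finsupp.mem_support_iff, ← h, Finsupp.finset_sum_apply]
  have h1 : (Finsupp.single (g i0) (1 : ℕ)) (g i0) = 1 := Finsupp.single_eq_same
  have hle : (Finsupp.single (g i0) (1 : ℕ)) (g i0)
      ≤ ∑ i ∈ s, (Finsupp.single (g i) (1 : ℕ)) (g i0) :=
    Finset.single_le_sum (f := fun i => (Finsupp.single (g i) (1 : ℕ)) (g i0))
      (fun i _ => Nat.zero_le _) hi0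
  omega

instance FFd_finite (α β : List ℕ) (S : ℕ × ℕ → ℕ) (d : ℕ →₀ ℕ) : Finite (FFd α β S d) := by
  apply Finite.of_injective
    (f := fun x : FFd α β S d => fun j : Fin (skewSize α β) =>
      (⟨x.1 j, mem_support_of_sum Finset.univ x.1 d x.2.2.2.2 (Finset.mem_univ j)⟩ :
        {v // v ∈ d.support}))
  intro x y h
  apply Subtype.ext
  funext j
  exact congrArg Subtype.val (congrFun h j)

instance GGd_finite (α β : List ℕ) (d : ℕ →₀ ℕ) : Finite (GGd α β d) := by
  apply Finite.of_injective
    (f := fun x : GGd α β d => fun c : {c // c ∈ skewCells α β} =>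
      (⟨x.1 c.1, mem_support_of_sum (skewCells α β) x.1 d x.2.2.2.2 c.2⟩ :
        {v // v ∈ d.support}))
  intro x y h
  apply Subtype.ext
  funext c
  by_cases hc : c ∈ skewCells α β
  · exact congrArg Subtype.val (congrFun h ⟨c, hc⟩)
  · rw [x.2.1 c hc, y.2.1 c hc]

instance SET_finite (α β : List ℕ) : Finite {S : ℕ × ℕ → ℕ // IsSET α β S} := by
  apply Finite.of_injective
    (f := fun x : {S : ℕ × ℕ → ℕ // IsSET α β S} => fun c : {c // c ∈ skewCells α β} =>
      (⟨x.1 c.1, x.2.1.1.mem c.1 ((mem_skewCells α β c.1).mp c.2)⟩ :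
        {v // v ∈ Finset.Icc 1 (skewSize α β)}))
  intro x y h
  apply Subtype.ext
  funext c
  by_cases hc : InSkew α β c
  · exact congrArg Subtype.val (congrFun h ⟨c, (mem_skewCells α β c).mpr hc⟩)
  · rw [x.2.1.1.zero_off c hc, y.2.1.1.zero_off c hc]

-- ### sigma equality helper

lemma sigma_eq_of {A : Type*} {PA : A → Prop} {B : Type*} {PB : {a // PA a} → B → Prop}
    (a a' : {x // PA x}) (b : {y // PB a y}) (b' : {y // PB a' y})
    (h1 : a.1 = a'.1) (h2 : b.1 = b'.1) :
    (⟨a, b⟩ : Σ x : {x // PA x}, {y // PB x y}) = ⟨a', b'⟩ := by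
  obtain ⟨a, ha⟩ := a
  obtain ⟨a', ha'⟩ := a'
  cases h1
  obtain ⟨b, hb⟩ := b
  obtain ⟨b', hb'⟩ := b'
  cases h2
  rfl

lemma sigma_eq_ESET {α β : List ℕ} {d : ℕ →₀ ℕ}
    (a a' : {S : ℕ × ℕ → ℕ // IsSET α β S}) (b : FFd α β a.1 d) (b' : FFd α β a'.1 d)
    (h1 : a.1 = a'.1) (h2 : b.1 = b'.1) :
    (⟨a, b⟩ : Σ S : {S : ℕ × ℕ → ℕ // IsSET α β S}, FFd α β S.1 d) = ⟨a', b'⟩ := by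
  obtain ⟨a, ha⟩ := a
  obtain ⟨a', ha'⟩ := a'
  cases h1
  obtain ⟨b, hb⟩ := b
  obtain ⟨b', hb'⟩ := b'
  cases h2
  rfl

-- ### the main bijection

noncomputable def mainEquiv (α β : List ℕ) (hsub : SubComp β α) (d : ℕ →₀ ℕ) :
    (Σ S : {S : ℕ × ℕ → ℕ // IsSET α β S}, FFd α β S.1 d) ≃ GGd α β d where
  toFun x :=
    ⟨Phi α β (skewSize α β) x.2.1 x.1.1, by
      obtain ⟨⟨S, hS⟩, f, hf1, hf2, hf3, hf4⟩ := x
      refine ⟨?_, ?_, ⟨?_, ?_⟩, ?_⟩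
      · intro c hc
        exact if_neg (fun h => hc ((mem_skewCells α β c).mpr h))
      · intro c hc
        exact Phi_pos hS.1.1 hf1 ((mem_skewCells α β c).mp hc)
      · exact Phi_colsStrict hS hf2 hf3
      · exact Phi_rowsWeak hS hf2
      · rw [Phi_weight hS.1.1]; exact hf4⟩
  invFun x :=
    ⟨⟨rkS α β x.1, rkS_isSET hsub x.2.2.2.1.1 x.2.2.2.1.2⟩,
      stdF α β (skewSize α β) x.1, by
      obtain ⟨T, hT0, hT1, ⟨hTc, hTr⟩, hT4⟩ := x
      refine ⟨?_, ?_, ?_, ?_⟩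
      · exact stdF_pos hsub (fun c hc => hT1 c ((mem_skewCells α β c).mpr hc))
      · exact stdF_mono hsub
      · exact fun j h1 h2 hdes => stdF_strict_at_des hsub j h1 h2 hdes
      · rw [← Phi_weight (f := stdF α β (skewSize α β) T) (rkS_std (T := T) hsub)]
        rw [show Phi α β (skewSize α β) (stdF α β (skewSize α β) T) (rkS α β T) = T from
          Phi_stdF_eq hsub (fun c hc => hT0 c (fun hm => hc ((mem_skewCells α β c).mp hm)))]
        exact hT4⟩
  left_inv := by
    rintro ⟨⟨S, hS⟩, f, hf1, hf2, hf3, hf4⟩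
    exact sigma_eq_ESET _ _ _ _ (rkS_Phi hsub hS hf2 hf3) (stdF_Phi hsub hS hf2 hf3)
  right_inv := by
    rintro ⟨T, hT0, hT1, ⟨hTc, hTr⟩, hT4⟩
    exact Subtype.ext (Phi_stdF_eq hsub
      (fun c hc => hT0 c (fun hm => hc ((mem_skewCells α β c).mp hm))))

-- ### AUX END

/-- the skew extended Schur function `E_{α/β}`:
`Σ_{T ∈ SET(α/β)} F_{comp(Des_dI(T))}` equals the generating function of all fillings of
`α/β` with strictly increasing columns and weakly increasing rows. -/
theorem skew_extended_schur (α β : List ℕ)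
    (hα : IsComposition α) (hβ : IsComposition β) (hsub : SubComp β α)
    (hN : 1 ≤ skewSize α β) :
    (∑ᶠ (T : ℕ × ℕ → ℕ) (_ : IsSET α β T), Fund (skewSize α β) (Des .dI α β T)) =
      genF (skewCells α β) (fun T => ColsStrict α β T ∧ RowsWeak α β T) := by
  classical
  haveI : Finite ↥{T : ℕ × ℕ → ℕ | IsSET α β T} := SET_finite α β
  have hfin : {T : ℕ × ℕ → ℕ | IsSET α β T}.Finite := Set.toFinite _
  have h1 : (∑ᶠ (T : ℕ × ℕ → ℕ) (_ : IsSET α β T), Fund (skewSize α β) (Des .dI α β T))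
      = ∑ T ∈ hfin.toFinset, Fund (skewSize α β) (Des .dI α β T) := by
    have h0 : (∑ᶠ (T : ℕ × ℕ → ℕ) (_ : IsSET α β T), Fund (skewSize α β) (Des .dI α β T))
        = ∑ᶠ (T : ℕ × ℕ → ℕ) (_ : T ∈ {T : ℕ × ℕ → ℕ | IsSET α β T}),
            Fund (skewSize α β) (Des .dI α β T) := rfl
    rw [h0, finsum_mem_eq_finite_toFinset_sum
      (fun T => Fund (skewSize α β) (Des .dI α β T)) hfin]
  rw [h1]
  funext d
  have h2 : (∑ T ∈ hfin.toFinset, Fund (skewSize α β) (Des .dI α β T)) d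
      = ∑ T ∈ hfin.toFinset, (Nat.card (FFd α β T d) : ℚ) := by
    exact map_sum (MvPowerSeries.coeff (R := ℚ) d)
      (fun T => Fund (skewSize α β) (Des .dI α β T)) hfin.toFinset
  rw [h2, genF_apply]
  rw [← Nat.cast_sum]
  congr 1
  haveI : Fintype {S : ℕ × ℕ → ℕ // IsSET α β S} := Fintype.ofFinite _
  haveI : ∀ S : {S : ℕ × ℕ → ℕ // IsSET α β S}, Fintype (FFd α β S.1 d) :=
    fun S => Fintype.ofFinite _
  have e1 : Nat.card (GGd α β d)
      = Nat.card (Σ S : {S : ℕ × ℕ → ℕ // IsSET α β S}, FFd α β S.1 d) :=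
    Nat.card_congr (mainEquiv α β hsub d).symm
  have e2 : Nat.card (Σ S : {S : ℕ × ℕ → ℕ // IsSET α β S}, FFd α β S.1 d)
      = ∑ S : {S : ℕ × ℕ → ℕ // IsSET α β S}, Nat.card (FFd α β S.1 d) := by
    rw [Nat.card_eq_fintype_card, Fintype.card_sigma]
    exact Finset.sum_congr rfl (fun S _ => (Nat.card_eq_fintype_card).symm)
  have e3 : ∑ S : {S : ℕ × ℕ → ℕ // IsSET α β S}, Nat.card (FFd α β S.1 d)
      = ∑ T ∈ hfin.toFinset, Nat.card (FFd α β T d) := by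
    refine Finset.sum_bij (fun (S : {S : ℕ × ℕ → ℕ // IsSET α β S}) _ => S.1) ?_ ?_ ?_ ?_
    · intro S _; exact hfin.mem_toFinset.mpr S.2
    · intro S _ S' _ h; exact Subtype.ext h
    · intro T hT; exact ⟨⟨T, hfin.mem_toFinset.mp hT⟩, Finset.mem_univ _, rfl⟩
    · intro S _; rfl
  rw [e1, e2, e3]

end ImmaculateSkew
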